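/- Let g be a finite-dimensional real Lie algebra, k₀ := min{dim g(ξ) : ξ ∈ g*}, and g*_gen := {ξ ∈ g* : dim g(ξ) = k₀}. If O ⊆ g* is a nonempty open subset such that O is contained in the closure of the coadjoint orbit Int(g)·ξ for every ξ ∈ O, then O ⊆ g*_gen. (In the paper: every coadjoint quasi-orbit of a solvable Lie group that is open in g* consists of coadjoint orbits of maximal dimension.) -/

import Mathlib

set_option linter.unusedSectionVars false
set_option maxHeartbeats 1000000

open Module

/-- The exponential of a linear endomorphism of a finite-dimensional real vector
space, computed via the matrix exponential in any basis. -/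
noncomputable def expEnd {V : Type*} [AddCommGroup V] [Module ℝ V] [FiniteDimensional ℝ V]
    (f : Module.End ℝ V) : Module.End ℝ V :=
  Matrix.toLin (Module.finBasis ℝ V) (Module.finBasis ℝ V)
    (NormedSpace.exp (LinearMap.toMatrix (Module.finBasis ℝ V) (Module.finBasis ℝ V) f))

/-- `Int(g)`: the subgroup of `GL(g)` generated by the exponentials `exp (ad x)`, `x ∈ g`. -/
noncomputable def intGroup (g : Type*) [LieRing g] [LieAlgebra ℝ g] [FiniteDimensional ℝ g] :
    Subgroup (g ≃ₗ[ℝ] g) :=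
  Subgroup.closure {γ : g ≃ₗ[ℝ] g | ∃ x : g, γ.toLinearMap = expEnd (LieAlgebra.ad ℝ g x)}

/-- The coadjoint orbit `Int(g)·ξ ⊆ g*`, where `γ·ξ := ξ ∘ γ⁻¹`. -/
noncomputable def coadOrbit {g : Type*} [LieRing g] [LieAlgebra ℝ g] [FiniteDimensional ℝ g]
    (ξ : Module.Dual ℝ g) : Set (Module.Dual ℝ g) :=
  {η | ∃ γ ∈ intGroup g, η = ξ ∘ₗ (γ⁻¹ : g ≃ₗ[ℝ] g).toLinearMap}

/-- The coadjoint stabilizer subalgebra `g(ξ) = {x ∈ g | ξ [x,·] = 0}`, as a subspace. -/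
def coadStab (g : Type*) [LieRing g] [LieAlgebra ℝ g] (ξ : Module.Dual ℝ g) :
    Submodule ℝ g where
  carrier := {x : g | ∀ y : g, ξ ⁅x, y⁆ = 0}
  add_mem' := by
    intro a b ha hb y
    rw [add_lie, map_add, ha y, hb y, add_zero]
  zero_mem' := by
    intro y
    rw [zero_lie, map_zero]
  smul_mem' := by
    intro c a ha y
    rw [smul_lie, map_smul, ha y, smul_zero]

/-! ### Auxiliary lemmas -/

open NormedSpace in
theorem matrix_exp_compat {n : ℕ} (A : Matrix (Fin n) (Fin n) ℝ)
    (F : (Fin n → ℝ) →L[ℝ] (Fin n → ℝ) →L[ℝ] (Fin n → ℝ))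
    (hF : ∀ u v, A.mulVec (F u v) = F (A.mulVec u) v + F u (A.mulVec v))
    (u₀ v₀ : Fin n → ℝ) :
    F ((exp A).mulVec u₀) ((exp A).mulVec v₀) = (exp A).mulVec (F u₀ v₀) := by
  letI : SeminormedRing (Matrix (Fin n) (Fin n) ℝ) := Matrix.linftyOpSemiNormedRing
  letI : NormedRing (Matrix (Fin n) (Fin n) ℝ) := Matrix.linftyOpNormedRing
  letI : NormedAlgebra ℝ (Matrix (Fin n) (Fin n) ℝ) := Matrix.linftyOpNormedAlgebra
  -- the continuous linear map M ↦ (w ↦ M.mulVec w)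
  let L₀ : Matrix (Fin n) (Fin n) ℝ →ₗ[ℝ] (Fin n → ℝ) →L[ℝ] (Fin n → ℝ) :=
    { toFun := fun M => LinearMap.toContinuousLinearMap M.mulVecLin
      map_add' := by intro M N; ext w; simp [Matrix.add_mulVec]
      map_smul' := by intro c M; ext w; simp [Matrix.smul_mulVec] }
  let L : Matrix (Fin n) (Fin n) ℝ →L[ℝ] (Fin n → ℝ) →L[ℝ] (Fin n → ℝ) :=
    LinearMap.toContinuousLinearMap L₀
  have hL : ∀ (M : Matrix (Fin n) (Fin n) ℝ) (w : Fin n → ℝ), L M w = M.mulVec w := by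
    intro M w; rfl
  set f : ℝ → (Fin n → ℝ) := fun t =>
    L (exp (t • (-A))) (F (L (exp (t • A)) u₀) (L (exp (t • A)) v₀)) with hf'
  have key : ∀ t : ℝ, HasDerivAt f 0 t := by
    intro t
    have hexp : HasDerivAt (fun s : ℝ => exp (s • A)) (exp (t • A) * A) t :=
      hasDerivAt_exp_smul_const A t
    have hexpneg : HasDerivAt (fun s : ℝ => exp (s • (-A))) (exp (t • (-A)) * (-A)) t :=
      hasDerivAt_exp_smul_const (-A) t
    have hu : HasDerivAt (fun s : ℝ => L (exp (s • A)) u₀) (L (exp (t • A) * A) u₀) t :=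
      (L.flip u₀).hasFDerivAt.comp_hasDerivAt t hexp
    have hv : HasDerivAt (fun s : ℝ => L (exp (s • A)) v₀) (L (exp (t • A) * A) v₀) t :=
      (L.flip v₀).hasFDerivAt.comp_hasDerivAt t hexp
    have hFu : HasDerivAt (fun s : ℝ => F (L (exp (s • A)) u₀))
        (F (L (exp (t • A) * A) u₀)) t :=
      F.hasFDerivAt.comp_hasDerivAt t hu
    have hw : HasDerivAt (fun s : ℝ => F (L (exp (s • A)) u₀) (L (exp (s • A)) v₀))
        (F (L (exp (t • A) * A) u₀) (L (exp (t • A)) v₀)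
          + F (L (exp (t • A)) u₀) (L (exp (t • A) * A) v₀)) t :=
      hFu.clm_apply hv
    have hc : HasDerivAt (fun s : ℝ => L (exp (s • (-A))))
        (L (exp (t • (-A)) * (-A))) t :=
      L.hasFDerivAt.comp_hasDerivAt t hexpneg
    have := hc.clm_apply hw
    refine this.congr_deriv ?_
    -- show the derivative is 0
    have hcomm : exp (t • A) * A = A * exp (t • A) :=
      (((Commute.refl A).smul_left t).exp_left).eq
    simp only [hL, hcomm, Matrix.mul_neg, Matrix.neg_mulVec, ← Matrix.mulVec_mulVec]
    rw [← hF]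
    simp
  have hconst : f 1 = f 0 := by
    have hdiff : Differentiable ℝ f := fun t => (key t).differentiableAt
    exact is_const_of_deriv_eq_zero hdiff (fun t => (key t).deriv) 1 0
  have h0 : f 0 = F u₀ v₀ := by
    simp [hf', hL, zero_smul, exp_zero, Matrix.one_mulVec]
  have h1 : f 1 = (exp (-A)).mulVec (F ((exp A).mulVec u₀) ((exp A).mulVec v₀)) := by
    simp [hf', hL, one_smul]
  have hinv : exp A * exp (-A) = 1 := by
    rw [← Matrix.exp_add_of_commute _ _ ((Commute.refl A).neg_right), add_neg_cancel, exp_zero]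
  have := h1.symm.trans (hconst.trans h0)
  calc F ((exp A).mulVec u₀) ((exp A).mulVec v₀)
      = (exp A * exp (-A)).mulVec (F ((exp A).mulVec u₀) ((exp A).mulVec v₀)) := by
        rw [hinv, Matrix.one_mulVec]
    _ = (exp A).mulVec ((exp (-A)).mulVec (F ((exp A).mulVec u₀) ((exp A).mulVec v₀))) := by
        rw [Matrix.mulVec_mulVec]
    _ = (exp A).mulVec (F u₀ v₀) := by rw [this]

theorem expEnd_lie {g : Type*} [LieRing g] [LieAlgebra ℝ g] [FiniteDimensional ℝ g]
    (D : Module.End ℝ g) (hD : ∀ a b : g, D ⁅a, b⁆ = ⁅D a, b⁆ + ⁅a, D b⁆) (a b : g) :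
    expEnd D ⁅a, b⁆ = ⁅expEnd D a, expEnd D b⁆ := by
  set bas := Module.finBasis ℝ g
  set e := bas.equivFun
  set A := LinearMap.toMatrix bas bas D with hA
  have htoLin : ∀ (M : Matrix (Fin (Module.finrank ℝ g)) (Fin (Module.finrank ℝ g)) ℝ) (z : g),
      Matrix.toLin bas bas M z = e.symm (M.mulVec (e z)) := by
    intro M z
    rw [Matrix.toLin_apply, Basis.equivFun_symm_apply]
    congr 1
  have hDz : ∀ z : g, e (D z) = A.mulVec (e z) := by
    intro z
    have : D z = Matrix.toLin bas bas A z := by rw [hA, Matrix.toLin_toMatrix]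
    rw [this, htoLin, LinearEquiv.apply_symm_apply]
  -- bilinear bracket in coordinates
  let F₁ : (Fin (Module.finrank ℝ g) → ℝ) →ₗ[ℝ] (Fin (Module.finrank ℝ g) → ℝ) →ₗ[ℝ]
      (Fin (Module.finrank ℝ g) → ℝ) :=
    LinearMap.mk₂ ℝ (fun u v => e ⁅e.symm u, e.symm v⁆)
      (by intro u u' v; simp only [map_add, add_lie])
      (by intro c u v; simp only [map_smul, smul_lie])
      (by intro u v v'; simp only [map_add, lie_add])
      (by intro c u v; simp only [map_smul, lie_smul])
  let F₂ : (Fin (Module.finrank ℝ g) → ℝ) →ₗ[ℝ]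
      ((Fin (Module.finrank ℝ g) → ℝ) →L[ℝ] (Fin (Module.finrank ℝ g) → ℝ)) :=
    { toFun := fun u => (F₁ u).toContinuousLinearMap
      map_add' := by intro u u'; ext v; simp
      map_smul' := by intro c u; ext v; simp }
  let F := LinearMap.toContinuousLinearMap F₂
  have hFa : ∀ u v, F u v = e ⁅e.symm u, e.symm v⁆ := fun u v => rfl
  have hF : ∀ u v, A.mulVec (F u v) = F (A.mulVec u) v + F u (A.mulVec v) := by
    intro u v
    obtain ⟨x, rfl⟩ : ∃ x, u = e x := ⟨e.symm u, (e.apply_symm_apply u).symm⟩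
    obtain ⟨y, rfl⟩ : ∃ y, v = e y := ⟨e.symm v, (e.apply_symm_apply v).symm⟩
    simp only [hFa, ← hDz, LinearEquiv.symm_apply_apply, hD, map_add]
  have key := matrix_exp_compat A F hF (e a) (e b)
  have hexp : ∀ z : g, expEnd D z = e.symm ((NormedSpace.exp A).mulVec (e z)) := by
    intro z; rw [expEnd, htoLin]
  have hab : e ⁅a, b⁆ = F (e a) (e b) := by
    rw [hFa, LinearEquiv.symm_apply_apply, LinearEquiv.symm_apply_apply]
  rw [hexp, hexp, hexp, hab, ← key, hFa, LinearEquiv.symm_apply_apply]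

section Aux
variable {g : Type*} [LieRing g] [LieAlgebra ℝ g] [FiniteDimensional ℝ g]

theorem intGroup_lie {γ : g ≃ₗ[ℝ] g} (hγ : γ ∈ intGroup g) (a b : g) :
    γ ⁅a, b⁆ = ⁅γ a, γ b⁆ := by
  let H : Subgroup (g ≃ₗ[ℝ] g) :=
    { carrier := {δ : g ≃ₗ[ℝ] g | ∀ a b : g, δ ⁅a, b⁆ = ⁅δ a, δ b⁆}
      one_mem' := by intro a b; rfl
      mul_mem' := by
        intro δ ε hδ hε a b
        show δ (ε ⁅a, b⁆) = ⁅δ (ε a), δ (ε b)⁆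
        rw [hε, hδ]
      inv_mem' := by
        intro δ hδ a b
        apply δ.injective
        show δ (δ.symm ⁅a, b⁆) = δ ⁅δ.symm a, δ.symm b⁆
        rw [hδ, δ.apply_symm_apply, δ.apply_symm_apply, δ.apply_symm_apply] }
  have : intGroup g ≤ H := by
    rw [intGroup, Subgroup.closure_le]
    rintro δ ⟨x, hx⟩ a b
    have happ : ∀ z : g, δ z = expEnd (LieAlgebra.ad ℝ g x) z := fun z =>
      LinearMap.congr_fun hx z
    rw [happ, happ, happ]
    exact expEnd_lie _ (fun a b => by
      simp only [LieAlgebra.ad_apply]; exact leibniz_lie x a b) a b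
  exact this hγ a b

theorem mem_coadStab {ξ : Module.Dual ℝ g} {x : g} :
    x ∈ coadStab g ξ ↔ ∀ y : g, ξ ⁅x, y⁆ = 0 := Iff.rfl

theorem finrank_coadStab_orbit {ξ ζ : Module.Dual ℝ g} (hζ : ζ ∈ coadOrbit ξ) :
    Module.finrank ℝ (coadStab g ζ) = Module.finrank ℝ (coadStab g ξ) := by
  obtain ⟨γ, hγ, rfl⟩ := hζ
  have hinv : γ⁻¹ ∈ intGroup g := (intGroup g).inv_mem hγ
  have hstab : coadStab g (ξ ∘ₗ (γ⁻¹ : g ≃ₗ[ℝ] g).toLinearMap)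
      = (coadStab g ξ).map (γ : g →ₗ[ℝ] g) := by
    ext x
    rw [mem_coadStab, Submodule.mem_map]
    constructor
    · intro h
      refine ⟨(γ⁻¹ : g ≃ₗ[ℝ] g) x, ?_, ?_⟩
      · intro z
        have := h (γ z)
        rw [LinearMap.comp_apply] at this
        simp only [LinearEquiv.coe_coe] at this
        rw [intGroup_lie hinv] at this
        simpa [show (γ⁻¹ : g ≃ₗ[ℝ] g) = γ.symm from rfl] using this
      · show γ (γ.symm x) = x
        exact γ.apply_symm_apply x
    · rintro ⟨y, hy, rfl⟩
      intro z
      rw [LinearMap.comp_apply]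
      simp only [LinearEquiv.coe_coe]
      rw [intGroup_lie hinv]
      show ξ ⁅γ.symm (γ y), γ.symm z⁆ = 0
      rw [γ.symm_apply_apply]
      exact hy _
  rw [hstab]
  exact LinearEquiv.finrank_map_eq γ _

/-- The map `x ↦ ζ ∘ (ad x)` whose kernel is `coadStab g ζ`. -/
noncomputable def coadMap (ζ : Module.Dual ℝ g) : g →ₗ[ℝ] Module.Dual ℝ g where
  toFun x := ζ ∘ₗ (LieAlgebra.ad ℝ g x : g →ₗ[ℝ] g)
  map_add' x y := by
    ext z; simp [LieAlgebra.ad_apply, add_lie]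
  map_smul' c x := by
    ext z; simp [LieAlgebra.ad_apply, smul_lie]

theorem coadMap_apply (ζ : Module.Dual ℝ g) (x y : g) : coadMap ζ x y = ζ ⁅x, y⁆ := rfl

theorem ker_coadMap (ζ : Module.Dual ℝ g) : LinearMap.ker (coadMap ζ) = coadStab g ζ := by
  ext x
  rw [LinearMap.mem_ker, mem_coadStab]
  constructor
  · intro h y
    rw [← coadMap_apply, h]
    rfl
  · intro h
    ext y
    rw [coadMap_apply ζ x y, h y]
    rfl

theorem le_finrank_range_iff (f : g →ₗ[ℝ] Module.Dual ℝ g) (k : ℕ) :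
    k ≤ finrank ℝ (LinearMap.range f) ↔
      ∃ v : Fin k → g, LinearIndependent ℝ (fun i => f (v i)) := by
  constructor
  · intro h
    obtain ⟨u, hu⟩ := exists_linearIndependent_of_le_finrank h
    choose v hv using fun i => (u i).2
    refine ⟨v, ?_⟩
    have : (fun i => f (v i)) = (LinearMap.range f).subtype ∘ u := by
      ext i : 1; simp [hv]
    rw [this]
    exact (LinearMap.linearIndependent_iff _ (Submodule.ker_subtype _)).mpr hu
  · rintro ⟨v, hv⟩
    have hle : Submodule.span ℝ (Set.range fun i => f (v i)) ≤ LinearMap.range f := by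
      rw [Submodule.span_le]
      rintro _ ⟨i, rfl⟩
      exact LinearMap.mem_range_self f (v i)
    calc k = Fintype.card (Fin k) := (Fintype.card_fin k).symm
      _ = finrank ℝ (Submodule.span ℝ (Set.range fun i => f (v i))) :=
          (finrank_span_eq_card hv).symm
      _ ≤ finrank ℝ (LinearMap.range f) := Submodule.finrank_mono hle

/-- Polynomial argument: independence of `a i + t • b i` fails only for finitely many `t`. -/
theorem finite_bad_params {r : ℕ} (a b : Fin r → Module.Dual ℝ g)
    (h1 : LinearIndependent ℝ (fun i => a i + b i)) :
    {t : ℝ | ¬ LinearIndependent ℝ (fun i => a i + t • b i)}.Finite := by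
  classical
  set w1 : Fin r → Module.Dual ℝ g := fun i => a i + b i with hw1
  set p : Submodule ℝ (Module.Dual ℝ g) := Submodule.span ℝ (Set.range w1) with hp
  obtain ⟨q, hq⟩ := p.exists_isCompl
  let bas : Basis (Fin r) ℝ p := Basis.span h1
  let π : Module.Dual ℝ g →ₗ[ℝ] (Fin r → ℝ) :=
    (Finsupp.linearEquivFunOnFinite ℝ ℝ (Fin r)).toLinearMap ∘ₗ
      bas.repr.toLinearMap ∘ₗ Submodule.linearProjOfIsCompl p q hq
  have hπw1 : ∀ i j, π (w1 i) j = (1 : Matrix (Fin r) (Fin r) ℝ) i j := by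
    intro i j
    have hmem : w1 i ∈ p := Submodule.subset_span (Set.mem_range_self i)
    have hproj : Submodule.linearProjOfIsCompl p q hq (w1 i) = ⟨w1 i, hmem⟩ :=
      Submodule.linearProjOfIsCompl_apply_left hq ⟨w1 i, hmem⟩
    have hbas : (⟨w1 i, hmem⟩ : p) = bas i := by
      exact (Basis.span_apply h1 i).symm
    simp only [π, LinearMap.comp_apply, hproj, hbas, LinearEquiv.coe_toLinearMap]
    rw [Basis.repr_self]
    simp [Finsupp.linearEquivFunOnFinite_apply, Finsupp.single_apply, Matrix.one_apply, eq_comm]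
  -- the polynomial
  set P : Matrix (Fin r) (Fin r) (Polynomial ℝ) :=
    Matrix.of (fun i j => Polynomial.C (π (a i) j) + Polynomial.X * Polynomial.C (π (b i) j))
    with hP
  have heval : ∀ t : ℝ, P.det.eval t
      = (Matrix.of (fun i j => π (a i + t • b i) j)).det := by
    intro t
    rw [show P.det.eval t = (Polynomial.evalRingHom t) P.det from rfl,
      RingHom.map_det]
    congr 1
    ext i j
    simp only [hP, RingHom.mapMatrix_apply, Polynomial.coe_evalRingHom, Matrix.map_apply,
      Matrix.of_apply, Polynomial.eval_add, Polynomial.eval_mul,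
      Polynomial.eval_C, Polynomial.eval_X, map_add, map_smul, Pi.add_apply, Pi.smul_apply,
      smul_eq_mul]
  have hq1 : P.det.eval 1 = 1 := by
    rw [heval]
    have : (Matrix.of (fun i j => π (a i + (1:ℝ) • b i) j)) = 1 := by
      ext i j
      rw [Matrix.of_apply]
      rw [show a i + (1:ℝ) • b i = w1 i by rw [hw1]; simp]
      exact hπw1 i j
    rw [this, Matrix.det_one]
  have hPne : P.det ≠ 0 := by
    intro h
    rw [h] at hq1
    simpa using hq1
  apply Set.Finite.subset (Polynomial.finite_setOf_isRoot hPne)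
  intro t ht
  simp only [Set.mem_setOf_eq] at ht ⊢
  by_contra hroot
  apply ht
  have hdet : (Matrix.of (fun i j => π (a i + t • b i) j)).det ≠ 0 := by
    rw [← heval]; exact hroot
  have hunit : IsUnit (Matrix.of (fun i j => π (a i + t • b i) j)) :=
    (Matrix.isUnit_iff_isUnit_det _).mpr (isUnit_iff_ne_zero.mpr hdet)
  have hrows := Matrix.linearIndependent_rows_iff_isUnit.mpr hunit
  have : LinearIndependent ℝ (fun i => π (a i + t • b i)) := by
    exact hrows
  exact LinearIndependent.of_comp π this

section Top
variable [TopologicalSpace (Module.Dual ℝ g)] [IsTopologicalAddGroup (Module.Dual ℝ g)]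
    [ContinuousSMul ℝ (Module.Dual ℝ g)] [T2Space (Module.Dual ℝ g)]

theorem isOpen_indep (k : ℕ) :
    IsOpen {ζ : Module.Dual ℝ g |
      ∃ v : Fin k → g, LinearIndependent ℝ (fun i => coadMap ζ (v i))} := by
  have hU : {ζ : Module.Dual ℝ g |
        ∃ v : Fin k → g, LinearIndependent ℝ (fun i => coadMap ζ (v i))}
      = ⋃ (v : Fin k → g), {ζ | LinearIndependent ℝ (fun i => coadMap ζ (v i))} := by
    ext ζ; simp
  rw [hU]
  apply isOpen_iUnion
  intro v
  set e0 := (Module.finBasis ℝ (Module.Dual ℝ g)).equivFun with he0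
  have hcont : Continuous fun ζ : Module.Dual ℝ g =>
      (fun i : Fin k => e0 (coadMap ζ (v i))) := by
    apply continuous_pi
    intro i
    have : (fun ζ : Module.Dual ℝ g => e0 (coadMap ζ (v i)))
        = (e0.toLinearMap ∘ₗ (LieAlgebra.ad ℝ g (v i) : g →ₗ[ℝ] g).dualMap) := by
      ext ζ
      rfl
    rw [this]
    exact LinearMap.continuous_of_finiteDimensional _
  have hset : {ζ : Module.Dual ℝ g | LinearIndependent ℝ (fun i => coadMap ζ (v i))}
      = (fun ζ : Module.Dual ℝ g => (fun i : Fin k => e0 (coadMap ζ (v i)))) ⁻¹'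
        {w : Fin k → (Fin (finrank ℝ (Module.Dual ℝ g)) → ℝ) | LinearIndependent ℝ w} := by
    ext ζ
    simp only [Set.mem_preimage, Set.mem_setOf_eq]
    constructor
    · intro h
      exact h.map' e0.toLinearMap (LinearEquiv.ker e0)
    · intro h
      exact LinearIndependent.of_comp e0.toLinearMap h
  rw [hset]
  exact isOpen_setOf_linearIndependent.preimage hcont

theorem isClosed_stab_ge (d : ℕ) :
    IsClosed {ζ : Module.Dual ℝ g | d ≤ finrank ℝ (coadStab g ζ)} := by
  rw [← isOpen_compl_iff]
  have hC : {ζ : Module.Dual ℝ g | d ≤ finrank ℝ (coadStab g ζ)}ᶜ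
      = {ζ : Module.Dual ℝ g | ∃ v : Fin (finrank ℝ g + 1 - d) → g,
          LinearIndependent ℝ (fun i => coadMap ζ (v i))} := by
    ext ζ
    simp only [Set.mem_compl_iff, Set.mem_setOf_eq, not_le]
    rw [← le_finrank_range_iff]
    have hrn := LinearMap.finrank_range_add_finrank_ker (coadMap ζ)
    rw [ker_coadMap] at hrn
    have hd : finrank ℝ (coadStab g ζ) ≤ finrank ℝ g := Submodule.finrank_le _
    omega
  rw [hC]
  exact isOpen_indep _

theorem exists_min_in_open {O : Set (Module.Dual ℝ g)} (hO : IsOpen O)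
    {ξ : Module.Dual ℝ g} (hξ : ξ ∈ O) :
    ∃ η ∈ O, finrank ℝ (coadStab g η)
      = ⨅ η' : Module.Dual ℝ g, finrank ℝ (coadStab g η') := by
  classical
  set k₀ := ⨅ η' : Module.Dual ℝ g, finrank ℝ (coadStab g η') with hk₀
  have hsinf : k₀ = sInf (Set.range fun η' : Module.Dual ℝ g => finrank ℝ (coadStab g η')) := rfl
  have hmem : k₀ ∈ Set.range fun η' : Module.Dual ℝ g => finrank ℝ (coadStab g η') := by
    rw [hsinf]
    exact Nat.sInf_mem (Set.range_nonempty _)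
  obtain ⟨η₀, hη₀⟩ := hmem
  replace hη₀ : finrank ℝ (coadStab g η₀) = k₀ := hη₀
  have hmin : ∀ η : Module.Dual ℝ g, k₀ ≤ finrank ℝ (coadStab g η) := by
    intro η
    rw [hsinf]
    exact Nat.sInf_le ⟨η, rfl⟩
  set r := finrank ℝ (LinearMap.range (coadMap η₀)) with hr
  obtain ⟨v, hv⟩ := (le_finrank_range_iff (coadMap η₀) r).mp le_rfl
  set a : Fin r → Module.Dual ℝ g := fun i => coadMap ξ (v i) with ha
  set bb : Fin r → Module.Dual ℝ g := fun i => coadMap (η₀ - ξ) (v i) with hbb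
  have hsum : ∀ (t : ℝ) (i : Fin r), coadMap (ξ + t • (η₀ - ξ)) (v i) = a i + t • bb i := by
    intro t i
    ext y
    simp [coadMap_apply, ha, hbb]
  have h1 : LinearIndependent ℝ (fun i => a i + bb i) := by
    have he : (fun i => a i + bb i) = fun i => coadMap η₀ (v i) := by
      ext i y
      simp [ha, hbb, coadMap_apply]
    rw [he]
    exact hv
  have hfin := finite_bad_params a bb h1
  have hcont : Continuous (fun t : ℝ => ξ + t • (η₀ - ξ)) :=
    continuous_const.add (continuous_id.smul continuous_const)
  have h0mem : (0 : ℝ) ∈ (fun t : ℝ => ξ + t • (η₀ - ξ)) ⁻¹' O := by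
    simp [hξ]
  obtain ⟨δ, hδ, hball⟩ := Metric.isOpen_iff.mp (hO.preimage hcont) 0 h0mem
  obtain ⟨t, ht⟩ := ((Set.Ioo_infinite hδ).diff hfin).nonempty
  obtain ⟨⟨ht0, htδ⟩, htgood⟩ := ht
  refine ⟨ξ + t • (η₀ - ξ), ?_, ?_⟩
  · apply hball
    simp only [Metric.mem_ball, Real.dist_eq, sub_zero]
    rw [abs_of_pos ht0]
    exact htδ
  · have hind : LinearIndependent ℝ (fun i => coadMap (ξ + t • (η₀ - ξ)) (v i)) := by
      have : LinearIndependent ℝ (fun i => a i + t • bb i) := by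
        by_contra hcon
        exact htgood hcon
      simpa [hsum t] using this
    have hrle : r ≤ finrank ℝ (LinearMap.range (coadMap (ξ + t • (η₀ - ξ)))) :=
      (le_finrank_range_iff _ r).mpr ⟨v, hind⟩
    have hrn1 := LinearMap.finrank_range_add_finrank_ker (coadMap (ξ + t • (η₀ - ξ)))
    have hrn0 := LinearMap.finrank_range_add_finrank_ker (coadMap η₀)
    rw [ker_coadMap] at hrn1 hrn0
    rw [hη₀] at hrn0
    have := hmin (ξ + t • (η₀ - ξ))
    omega

end Top
end Aux

/-- If `O ⊆ g*` is a nonempty open subset contained in the closure of the coadjoint orbit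
`Int(g)·ξ` of each of its points `ξ`, then `O ⊆ g*_gen`, the set of functionals `ξ` with
`dim g(ξ)` minimal (equivalently, whose coadjoint orbit has maximal dimension).
(The dual `g*` carries its standard topology: any Hausdorff vector topology, which is
unique since `g*` is finite-dimensional.) -/
theorem statement7 {g : Type*} [LieRing g] [LieAlgebra ℝ g] [FiniteDimensional ℝ g]
    [TopologicalSpace (Module.Dual ℝ g)] [IsTopologicalAddGroup (Module.Dual ℝ g)]
    [ContinuousSMul ℝ (Module.Dual ℝ g)] [T2Space (Module.Dual ℝ g)]
    (O : Set (Module.Dual ℝ g)) (hne : O.Nonempty) (hO : IsOpen O)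
    (horb : ∀ ξ ∈ O, O ⊆ closure (coadOrbit ξ)) :
    O ⊆ {ξ : Module.Dual ℝ g |
        Module.finrank ℝ (coadStab g ξ) = ⨅ η : Module.Dual ℝ g, Module.finrank ℝ (coadStab g η)} := by
  intro ξ hξ
  obtain ⟨η, hηO, hηmin⟩ := exists_min_in_open hO hξ
  set d := Module.finrank ℝ (coadStab g ξ) with hd
  have horb_sub : coadOrbit ξ ⊆ {ζ : Module.Dual ℝ g | d ≤ finrank ℝ (coadStab g ζ)} := by
    intro ζ hζ
    exact (finrank_coadStab_orbit hζ).ge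
  have hclosure : closure (coadOrbit ξ) ⊆ {ζ : Module.Dual ℝ g | d ≤ finrank ℝ (coadStab g ζ)} :=
    (isClosed_stab_ge d).closure_subset_iff.mpr horb_sub
  have hη_cl : η ∈ closure (coadOrbit ξ) := horb ξ hξ hηO
  have hdk : d ≤ finrank ℝ (coadStab g η) := hclosure hη_cl
  rw [hηmin] at hdk
  have hmin : (⨅ η' : Module.Dual ℝ g, finrank ℝ (coadStab g η'))
      ≤ finrank ℝ (coadStab g ξ) := Nat.sInf_le ⟨ξ, rfl⟩
  exact le_antisymm hdk hmin
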